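/- For A > 0, there exists a positive integer j with π/(j+1) ≤ π/(2A) and π/(√3·A) ≤ π/j, or 0 < A ≤ 1/2, if and only if A ∈ A_c := (0,1/2] ∪ ⋃_{k=1}^{6}[k/√3, (k+1)/2]. -/

import Mathlib

open Set Real

noncomputable def Ac : Set ℝ :=
  Ioc 0 (1 / 2) ∪ ⋃ k ∈ Finset.Icc (1 : ℕ) 6, Icc ((k : ℝ) / Real.sqrt 3) (((k : ℝ) + 1) / 2)

/-- For `A > 0`: there is a positive integer `j` with `π/(j+1) ≤ π/(2A)` and
`π/(√3 A) ≤ π/j`, or `0 < A ≤ 1/2`, if and only if `A ∈ A_c`. -/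
theorem stmt11 (A : ℝ) (hA : 0 < A) :
    ((∃ j : ℕ, 1 ≤ j ∧ π / ((j : ℝ) + 1) ≤ π / (2 * A) ∧
        π / (Real.sqrt 3 * A) ≤ π / (j : ℝ)) ∨ A ≤ 1 / 2) ↔ A ∈ Ac := by
  have hπ : (0:ℝ) < π := Real.pi_pos
  have hs : (0:ℝ) < Real.sqrt 3 := Real.sqrt_pos.mpr (by norm_num)
  constructor
  · rintro (⟨j, hj1, h1, h2⟩ | hle)
    · have hjpos : (0:ℝ) < (j:ℝ) := by exact_mod_cast hj1
      have hA1 : 2*A ≤ (j:ℝ)+1 := (div_le_div_iff_of_pos_left hπ (by positivity) (by positivity)).mp h1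
      have hA2 : (j:ℝ) ≤ Real.sqrt 3 * A := (div_le_div_iff_of_pos_left hπ (by positivity) hjpos).mp h2
      have hj6 : j ≤ 6 := by
        by_contra h
        push_neg at h
        have hj7 : (7:ℝ) ≤ (j:ℝ) := by exact_mod_cast h
        have hlt : Real.sqrt 3 < 1.74 := by
          rw [show (1.74:ℝ) = Real.sqrt (1.74^2) by rw [Real.sqrt_sq] <;> norm_num]
          exact Real.sqrt_lt_sqrt (by norm_num) (by norm_num)
        nlinarith
      refine Or.inr (mem_iUnion₂.mpr ⟨j, Finset.mem_Icc.mpr ⟨hj1, hj6⟩, ?_, ?_⟩)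
      · rw [div_le_iff₀ hs]; nlinarith
      · linarith
    · exact Or.inl ⟨hA, hle⟩
  · rintro (⟨_, hle⟩ | hmem)
    · exact Or.inr hle
    · obtain ⟨k, hk, hl, hr⟩ := mem_iUnion₂.mp hmem
      obtain ⟨hk1, hk6⟩ := Finset.mem_Icc.mp hk
      have hkpos : (0:ℝ) < (k:ℝ) := by exact_mod_cast hk1
      refine Or.inl ⟨k, hk1, ?_, ?_⟩
      · exact (div_le_div_iff_of_pos_left hπ (by positivity) (by positivity)).mpr (by linarith)
      · apply (div_le_div_iff_of_pos_left hπ (by positivity) hkpos).mpr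
        rw [div_le_iff₀ hs] at hl
        nlinarith
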